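/- Let 1 → A → Γ → Q → 1 be a short exact sequence of groups with A abelian, and let Q act on A by conjugation in Γ. Assume that the group cohomology H²(Q; A) is finite, and let s be an integer with s ≡ 1 mod |H²(Q; A)|. Let sA := {aˢ : a ∈ A}, a normal subgroup of Γ. Then the induced short exact sequence 1 → A/sA → Γ/sA → Q → 1 splits: there exists a group homomorphism σ : Q → Γ/sA whose composite with the projection Γ/sA → Q is the identity on Q. -/

import Mathlib

/-- Let `1 → A → Γ → Q → 1` be a short exact sequence of groups with `A`
abelian, and let `Q` act on `A` by conjugation in `Γ` (the representation `ρ` below).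
Assume that `H²(Q; A)` is finite and let `s` be an integer with `s ≡ 1 mod |H²(Q; A)|`.
Let `sA := {aˢ : a ∈ A}`, a normal subgroup of `Γ`.  Then the induced short exact sequence
`1 → A/sA → Γ/sA → Q → 1` splits:  there is a homomorphism `σ : Q → Γ/sA` whose composite
with the projection `Γ/sA → Q` is the identity (i.e. every `σ q` is represented by an
element of `Γ` mapping to `q` under `pr`). -/
theorem induced_extension_splits
    (A Γ Q : Type) [CommGroup A] [Group Γ] [Group Q]
    (ι : A →* Γ) (pr : Γ →* Q)
    (hι : Function.Injective ι) (hpr : Function.Surjective pr)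
    (hexact : pr.ker = ι.range)
    (ρ : Representation ℤ Q (Additive A))
    (hρ : ∀ (γ : Γ) (a : A),
      ι (Additive.toMul (ρ (pr γ) (Additive.ofMul a))) = γ * ι a * γ⁻¹)
    (hfin : Finite (groupCohomology (Rep.of ρ) 2))
    (s : ℤ) (hs : s ≡ 1 [ZMOD (Nat.card (groupCohomology (Rep.of ρ) 2) : ℤ)])
    [hN : ((ι.comp (zpowGroupHom s)).range).Normal] :
    ∃ σ : Q →* Γ ⧸ (ι.comp (zpowGroupHom s)).range,
      ∀ q : Q, ∃ γ : Γ, pr γ = q ∧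
        (QuotientGroup.mk γ : Γ ⧸ (ι.comp (zpowGroupHom s)).range) = σ q := by
  classical
  set R : Rep ℤ Q := Rep.of ρ with hR
  -- a set-theoretic section of `pr`
  set τ : Q → Γ := Function.surjInv hpr with hτdef
  have hτ : ∀ q, pr (τ q) = q := fun q => Function.surjInv_eq hpr q
  -- elements of `ker pr` come from `A`
  have key : ∀ γ : Γ, pr γ = 1 → ∃ a : A, ι a = γ := by
    intro γ h
    have : γ ∈ ι.range := hexact ▸ (MonoidHom.mem_ker.2 h)
    exact this
  have hker : ∀ g h : Q, pr (τ g * τ h * (τ (g * h))⁻¹) = 1 := by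
    intro g h; simp [map_mul, hτ, mul_assoc]
  -- the 2-cocycle of the extension
  set a0 : Q → Q → A := fun g h => (key _ (hker g h)).choose with ha0def
  have ha0 : ∀ g h : Q, ι (a0 g h) = τ g * τ h * (τ (g * h))⁻¹ :=
    fun g h => (key _ (hker g h)).choose_spec
  have hconj : ∀ (g : Q) (a : A),
      ι (Additive.toMul (ρ g (Additive.ofMul a))) = τ g * ι a * (τ g)⁻¹ := by
    intro g a
    have := hρ (τ g) a
    rwa [hτ] at this
  have inj2 : ∀ x y : Additive A,
      ι (Additive.toMul x) = ι (Additive.toMul y) → x = y := by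
    intro x y h
    exact hι h
  set f : Q × Q → Additive A := fun p => Additive.ofMul (a0 p.1 p.2) with hfdef
  have hf : f ∈ groupCohomology.cocycles₂ R := by
    rw [groupCohomology.mem_cocycles₂_iff]
    intro g h j
    apply inj2
    show ι (Additive.toMul (f (g * h, j)) * Additive.toMul (f (g, h)))
      = ι (Additive.toMul (ρ g (f (h, j))) * Additive.toMul (f (g, h * j)))
    rw [map_mul, map_mul]
    show ι (a0 (g * h) j) * ι (a0 g h)
      = ι (Additive.toMul (ρ g (Additive.ofMul (a0 h j)))) * ι (a0 g (h * j))
    rw [← map_mul, mul_comm (a0 (g * h) j) (a0 g h), map_mul, hconj g (a0 h j),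
      ha0, ha0, ha0, ha0, mul_assoc g h j]
    group
  set F : groupCohomology.cocycles₂ R := ⟨f, hf⟩ with hFdef
  set n : ℕ := Nat.card (groupCohomology R 2) with hndef
  -- finiteness transfers to the concrete H²
  have e : groupCohomology R 2 ≃ groupCohomology.H2 R :=
    Equiv.refl _
  haveI : Finite (groupCohomology.H2 R) := Finite.of_equiv _ e
  have hcard : Nat.card (groupCohomology.H2 R) = n := (Nat.card_congr e).symm
  have hzero : ((n : ℤ)) • (groupCohomology.H2π R F) = 0 := by
    rw [natCast_zsmul, ← hcard]
    exact card_nsmul_eq_zero'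
  have hmem : ⇑((n : ℤ) • F : groupCohomology.cocycles₂ R)
      ∈ groupCohomology.coboundaries₂ R := by
    have h1 : groupCohomology.H2π R ((n : ℤ) • F)
        = (n : ℤ) • groupCohomology.H2π R F := map_zsmul (groupCohomology.H2π R).hom _ _
    exact (groupCohomology.H2π_eq_zero_iff _).1 (h1.trans hzero)
  obtain ⟨x₀, hx₀⟩ := hmem
  have hex : ∃ y : Q → Additive A,
      ∀ g h : Q, ρ g (y h) - y (g * h) + y g = (n : ℤ) • f (g, h) :=
    ⟨x₀, fun g h => congrFun hx₀ (g, h)⟩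
  obtain ⟨x, hx'⟩ := hex
  -- `s = 1 + n * k`
  obtain ⟨k, hk⟩ : (n : ℤ) ∣ s - 1 := hs.symm.dvd
  have hs' : (k * (n : ℤ) + 1) = s := by linarith
  have key2 : ∀ g h : Q,
      k • x g + ρ g (k • x h) + f (g, h) = s • f (g, h) + k • x (g * h) := by
    intro g h
    have h1 : k • x g + ρ g (k • x h) + f (g, h) - k • x (g * h)
        = k • (ρ g (x h) - x (g * h) + x g) + f (g, h) := by
      rw [map_zsmul, smul_add, smul_sub]
      abel
    have h2 : k • ((n : ℤ) • f (g, h)) + f (g, h) = s • f (g, h) := by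
      rw [smul_smul, ← hs', add_smul, one_smul]
    exact eq_add_of_sub_eq (h1.trans (by rw [hx' g h, h2]))
  set w : Q → A := fun q => Additive.toMul (k • x q) with hwdef
  have hA : ∀ g h : Q,
      (w g * Additive.toMul (ρ g (Additive.ofMul (w h))) * a0 g h : A)
        = Additive.toMul (s • f (g, h)) * w (g * h) := by
    intro g h
    exact congrArg Additive.toMul (key2 g h)
  set N := (ι.comp (zpowGroupHom s)).range with hNdef
  have hmemN : ∀ g h : Q, ι (Additive.toMul (s • f (g, h))) ∈ N := by
    intro g h
    refine ⟨a0 g h, ?_⟩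
    show ι ((a0 g h) ^ s) = _
    exact congrArg ι (toMul_zsmul s (f (g, h))).symm
  have hmul : ∀ g h : Q, (ι (w g) * τ g) * (ι (w h) * τ h)
      = ι (Additive.toMul (s • f (g, h))) * (ι (w (g * h)) * τ (g * h)) := by
    intro g h
    have e1 : τ g * ι (w h) = ι (Additive.toMul (ρ g (Additive.ofMul (w h)))) * τ g := by
      rw [hconj g (w h)]; group
    have e2 : τ g * τ h = ι (a0 g h) * τ (g * h) := by rw [ha0 g h]; group
    calc (ι (w g) * τ g) * (ι (w h) * τ h)
        = ι (w g) * (τ g * ι (w h)) * τ h := by group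
      _ = ι (w g) * (ι (Additive.toMul (ρ g (Additive.ofMul (w h)))) * τ g) * τ h := by
          rw [e1]
      _ = (ι (w g) * ι (Additive.toMul (ρ g (Additive.ofMul (w h))))) * (τ g * τ h) := by
          group
      _ = (ι (w g) * ι (Additive.toMul (ρ g (Additive.ofMul (w h)))))
            * (ι (a0 g h) * τ (g * h)) := by rw [e2]
      _ = ι (w g * Additive.toMul (ρ g (Additive.ofMul (w h))) * a0 g h) * τ (g * h) := by
          rw [map_mul, map_mul]; group
      _ = ι (Additive.toMul (s • f (g, h)) * w (g * h)) * τ (g * h) := by rw [hA g h]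
      _ = _ := by rw [map_mul]; group
  have hhom : ∀ g h : Q,
      (QuotientGroup.mk (ι (w (g * h)) * τ (g * h)) : Γ ⧸ N)
        = QuotientGroup.mk (ι (w g) * τ g) * QuotientGroup.mk (ι (w h) * τ h) := by
    intro g h
    have h1 : (QuotientGroup.mk' N) (ι (Additive.toMul (s • f (g, h)))) = 1 :=
      (QuotientGroup.eq_one_iff _).2 (hmemN g h)
    show (QuotientGroup.mk' N) (ι (w (g * h)) * τ (g * h))
      = (QuotientGroup.mk' N) (ι (w g) * τ g) * (QuotientGroup.mk' N) (ι (w h) * τ h)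
    calc (QuotientGroup.mk' N) (ι (w (g * h)) * τ (g * h))
        = (QuotientGroup.mk' N) (ι (Additive.toMul (s • f (g, h))))
            * (QuotientGroup.mk' N) (ι (w (g * h)) * τ (g * h)) := by
          rw [h1, one_mul]
      _ = (QuotientGroup.mk' N)
            (ι (Additive.toMul (s • f (g, h))) * (ι (w (g * h)) * τ (g * h))) :=
          (map_mul _ _ _).symm
      _ = (QuotientGroup.mk' N) ((ι (w g) * τ g) * (ι (w h) * τ h)) := by rw [hmul g h]
      _ = (QuotientGroup.mk' N) (ι (w g) * τ g) * (QuotientGroup.mk' N) (ι (w h) * τ h) :=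
          map_mul _ _ _
  refine ⟨MonoidHom.mk' (fun q => QuotientGroup.mk (ι (w q) * τ q))
    (fun g h => hhom g h), fun q => ⟨ι (w q) * τ q, ?_, rfl⟩⟩
  have : pr (ι (w q)) = 1 :=
    MonoidHom.mem_ker.1 (hexact ▸ (⟨w q, rfl⟩ : ι (w q) ∈ ι.range))
  rw [map_mul, this, one_mul, hτ]
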